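/- Suppose $a_1, a_2, b_1, b_2, \sigma > 0$ with $b_1 + b_2 = a_1 + a_2$. Then for $z$ with $|z| < 1$: ${}_3F_2(\sigma, a_1, a_2; b_1, b_2; -z) = \frac{\Gamma(b_1)\Gamma(b_2)}{\Gamma(a_1)\Gamma(a_2)}\left\{\frac{1}{(1+z)^\sigma} + \int_0^1 \frac{(b_1-a_1)(b_2-a_1)\, t^{a_2-1}}{(1+zt)^\sigma}\, {}_2F_1(b_1-a_1+1, b_2-a_1+1; 2; 1-t)\, dt\right\}$. -/

import Mathlib

open Complex Real Filter MeasureTheory Set Topology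

/-- Pochhammer symbol `(a)_n` for real `a`. -/
noncomputable def poch (a : ℝ) (n : ℕ) : ℝ := Polynomial.eval a (ascPochhammer ℝ n)

/-- Gauss hypergeometric series `₂F₁(p,q;r;x)` for real parameters/argument. -/
noncomputable def Gauss2F1 (p q r x : ℝ) : ℝ :=
  ∑' n : ℕ, poch p n * poch q n / (poch r n * n.factorial) * x ^ n

lemma poch_zero (a : ℝ) : poch a 0 = 1 := by simp [poch]

lemma poch_succ (a : ℝ) (n : ℕ) : poch a (n+1) = poch a n * (a + n) := by
  simp [poch, ascPochhammer_succ_eval]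

lemma poch_succ_left (a : ℝ) (n : ℕ) : poch a (n+1) = a * poch (a+1) n := by
  simp only [poch, ascPochhammer_succ_left, Polynomial.eval_mul, Polynomial.eval_X,
    Polynomial.eval_comp, Polynomial.eval_add, Polynomial.eval_one]

lemma poch_add (a : ℝ) (n m : ℕ) : poch a (n+m) = poch a n * poch (a+n) m := by
  have := ascPochhammer_mul ℝ n m
  have h2 := congrArg (Polynomial.eval a) this
  simp only [Polynomial.eval_mul, Polynomial.eval_comp, Polynomial.eval_add,
    Polynomial.eval_X, Polynomial.eval_natCast] at h2
  exact h2.symm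

lemma poch_pos {a : ℝ} (ha : 0 < a) (n : ℕ) : 0 < poch a n := by
  induction n with
  | zero => simp [poch_zero]
  | succ n ih => rw [poch_succ]; positivity

lemma poch_nonneg {a : ℝ} (ha : 0 ≤ a) (n : ℕ) : 0 ≤ poch a n := by
  induction n with
  | zero => simp [poch_zero]
  | succ n ih => rw [poch_succ]; positivity

lemma poch_le_poch {a b : ℝ} (ha : 0 ≤ a) (hab : a ≤ b) (n : ℕ) : poch a n ≤ poch b n := by
  induction n with
  | zero => simp [poch_zero]
  | succ n ih =>
    rw [poch_succ, poch_succ]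
    have h1 : (0:ℝ) ≤ a + n := by positivity
    exact mul_le_mul ih (by linarith) h1 ((poch_nonneg (by linarith) n))

lemma abs_poch_le (a : ℝ) (n : ℕ) : |poch a n| ≤ poch |a| n := by
  induction n with
  | zero => simp [poch_zero]
  | succ n ih =>
    rw [poch_succ, poch_succ, abs_mul]
    refine mul_le_mul ih ((abs_add_le _ _).trans ?_) (abs_nonneg _) (poch_nonneg (abs_nonneg a) n)
    simp

lemma poch_one (n : ℕ) : poch 1 n = n.factorial := by
  induction n with
  | zero => simp [poch_zero]
  | succ n ih => rw [poch_succ, ih, Nat.factorial_succ]; push_cast; ring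

lemma poch_two (n : ℕ) : poch 2 n = (n+1).factorial := by
  induction n with
  | zero => simp [poch_zero]
  | succ n ih =>
    rw [poch_succ, ih]
    have : n + 1 + 1 = (n+1)+1 := rfl
    rw [this, Nat.factorial_succ (n+1)]
    push_cast; ring

lemma Gamma_poch {a : ℝ} (ha : 0 < a) (n : ℕ) :
    Real.Gamma (a + n) = Real.Gamma a * poch a n := by
  induction n with
  | zero => simp [poch_zero]
  | succ n ih =>
    have h1 : a + ((n:ℝ)+1) = (a + n) + 1 := by ring
    push_cast
    rw [h1, Real.Gamma_add_one (by positivity), ih, poch_succ]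
    ring

lemma poch_ne_zero {a : ℝ} (ha : 0 < a) (n : ℕ) : poch a n ≠ 0 := (poch_pos ha n).ne'

-- Gautschi-type bounds from log-convexity of Gamma
lemma gautschi_upper {x a : ℝ} (hx : 0 < x) (ha : a ∈ Set.Icc (0:ℝ) 1) :
    Real.Gamma (x + a) ≤ Real.Gamma x * x ^ a := by
  obtain ⟨ha0, ha1⟩ := ha
  have hG : 0 < Real.Gamma x := Real.Gamma_pos_of_pos hx
  have hGa : 0 < Real.Gamma (x + a) := Real.Gamma_pos_of_pos (by linarith)
  have hcx : Real.log (Real.Gamma (x + a)) ≤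
      (1 - a) * Real.log (Real.Gamma x) + a * Real.log (Real.Gamma (x+1)) := by
    have := Real.convexOn_log_Gamma.2 (Set.mem_Ioi.2 hx) (Set.mem_Ioi.2 (by linarith : (0:ℝ) < x + 1))
      (by linarith : (0:ℝ) ≤ 1 - a) ha0 (by ring)
    simpa [smul_eq_mul, Function.comp, show (1-a)*x + a*(x+1) = x + a by ring] using this
  have hx1 : Real.Gamma (x+1) = x * Real.Gamma x := Real.Gamma_add_one hx.ne'
  rw [hx1, Real.log_mul hx.ne' hG.ne'] at hcx
  have : Real.log (Real.Gamma (x + a)) ≤ Real.log (Real.Gamma x * x ^ a) := by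
    rw [Real.log_mul hG.ne' (Real.rpow_pos_of_pos hx a).ne', Real.log_rpow hx]
    nlinarith [hcx]
  exact (Real.log_le_log_iff hGa (by positivity)).1 this

lemma gautschi_lower {x a : ℝ} (hx : 0 < x) (ha : a ∈ Set.Icc (0:ℝ) 1) :
    Real.Gamma x * x ≤ Real.Gamma (x + a) * (x + a) ^ (1 - a) := by
  obtain ⟨ha0, ha1⟩ := ha
  have hxa : 0 < x + a := by linarith
  have hG : 0 < Real.Gamma x := Real.Gamma_pos_of_pos hx
  have hGa : 0 < Real.Gamma (x + a) := Real.Gamma_pos_of_pos hxa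
  have hcx : Real.log (Real.Gamma (x + 1)) ≤
      a * Real.log (Real.Gamma (x + a)) + (1 - a) * Real.log (Real.Gamma (x + a + 1)) := by
    have := Real.convexOn_log_Gamma.2 (Set.mem_Ioi.2 hxa)
      (Set.mem_Ioi.2 (by linarith : (0:ℝ) < x + a + 1)) ha0
      (by linarith : (0:ℝ) ≤ 1 - a) (by ring)
    simpa [smul_eq_mul, Function.comp, show a*(x+a) + (1-a)*(x+a+1) = x + 1 by ring] using this
  rw [Real.Gamma_add_one hx.ne', Real.Gamma_add_one hxa.ne',
    Real.log_mul hx.ne' hG.ne', Real.log_mul hxa.ne' hGa.ne'] at hcx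
  have : Real.log (Real.Gamma x * x) ≤ Real.log (Real.Gamma (x + a) * (x + a) ^ (1 - a)) := by
    rw [Real.log_mul hG.ne' hx.ne', Real.log_mul hGa.ne' (Real.rpow_pos_of_pos hxa _).ne',
      Real.log_rpow hxa]
    nlinarith [hcx]
  exact (Real.log_le_log_iff (by positivity) (by positivity)).1 this

noncomputable def gr (a : ℝ) : ℝ → ℝ := fun x => Real.Gamma (x + a) / (Real.Gamma x * x ^ a)

lemma tendsto_div_add_const (a : ℝ) : Tendsto (fun x : ℝ => x / (x + a)) atTop (𝓝 1) := by
  have h1 : Tendsto (fun x : ℝ => 1 + a / x) atTop (𝓝 1) := by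
    have := tendsto_const_nhds (α := ℝ) (x := a) (f := atTop).div_atTop tendsto_id
    simpa using (tendsto_const_nhds (x := (1:ℝ))).add this
  have h2 : Tendsto (fun x : ℝ => (1 + a / x)⁻¹) atTop (𝓝 1) := by
    simpa using h1.inv₀ one_ne_zero
  refine h2.congr' ?_
  filter_upwards [eventually_gt_atTop (max 0 (-a + 1))] with x hx
  have hx0 : 0 < x := lt_of_le_of_lt (le_max_left _ _) hx
  have hxa : 0 < x + a := by have := lt_of_le_of_lt (le_max_right _ _) hx; linarith
  field_simp

lemma tendsto_gr_base {a : ℝ} (ha : a ∈ Set.Icc (0:ℝ) 1) : Tendsto (gr a) atTop (𝓝 1) := by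
  obtain ⟨ha0, ha1⟩ := ha
  have hlow : Tendsto (fun x : ℝ => (x / (x + a)) ^ (1 - a)) atTop (𝓝 1) := by
    have := (tendsto_div_add_const a).rpow_const (p := 1 - a) (Or.inr (by linarith))
    simpa using this
  refine tendsto_of_tendsto_of_tendsto_of_le_of_le' hlow tendsto_const_nhds ?_ ?_
  · filter_upwards [eventually_gt_atTop (0:ℝ)] with x hx
    have hxa : 0 < x + a := by linarith
    have hG : 0 < Real.Gamma x := Real.Gamma_pos_of_pos hx
    have hxp : 0 < x ^ a := Real.rpow_pos_of_pos hx a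
    have key := gautschi_lower hx ⟨ha0, ha1⟩
    rw [gr, le_div_iff₀ (by positivity)]
    have e1 : (x / (x + a)) ^ (1 - a) * (Real.Gamma x * x ^ a)
        = (Real.Gamma x * x) / (x + a) ^ (1 - a) := by
      rw [Real.div_rpow hx.le hxa.le]
      have : x ^ (1 - a) * x ^ a = x := by
        rw [← Real.rpow_add hx]; simp
      field_simp
      nlinarith [this, Real.rpow_pos_of_pos hxa (1-a), hG]
    rw [e1, div_le_iff₀ (Real.rpow_pos_of_pos hxa _)]
    linarith [key]
  · filter_upwards [eventually_gt_atTop (0:ℝ)] with x hx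
    have hG : 0 < Real.Gamma x := Real.Gamma_pos_of_pos hx
    have hxp : 0 < x ^ a := Real.rpow_pos_of_pos hx a
    rw [gr, div_le_one (by positivity)]
    simpa using gautschi_upper hx ⟨ha0, ha1⟩

lemma tendsto_gr_succ {a : ℝ} (h : Tendsto (gr a) atTop (𝓝 1)) :
    Tendsto (gr (a + 1)) atTop (𝓝 1) := by
  have hq : Tendsto (fun x : ℝ => (x + a) / x * gr a x) atTop (𝓝 1) := by
    have h1 : Tendsto (fun x : ℝ => (x + a) / x) atTop (𝓝 1) := by
      have h2 : Tendsto (fun x : ℝ => 1 + a / x) atTop (𝓝 1) := by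
        have := tendsto_const_nhds (α := ℝ) (x := a) (f := atTop).div_atTop tendsto_id
        simpa using (tendsto_const_nhds (x := (1:ℝ))).add this
      refine h2.congr' ?_
      filter_upwards [eventually_gt_atTop (0:ℝ)] with x hx
      field_simp
    simpa using h1.mul h
  refine hq.congr' ?_
  filter_upwards [eventually_gt_atTop (max 0 (-a+1))] with x hx
  have hx0 : 0 < x := lt_of_le_of_lt (le_max_left _ _) hx
  have hxa : 0 < x + a := by have := lt_of_le_of_lt (le_max_right _ _) hx; linarith
  have hG : 0 < Real.Gamma x := Real.Gamma_pos_of_pos hx0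
  have hGa : 0 < Real.Gamma (x + a) := Real.Gamma_pos_of_pos hxa
  have e1 : Real.Gamma (x + (a+1)) = (x + a) * Real.Gamma (x + a) := by
    rw [show x + (a+1) = (x+a) + 1 by ring, Real.Gamma_add_one hxa.ne']
  have e2 : x ^ (a + 1) = x ^ a * x := by
    rw [Real.rpow_add hx0]; simp
  rw [gr, gr, e1, e2]
  field_simp

lemma tendsto_gr_pred {a : ℝ} (h : Tendsto (gr a) atTop (𝓝 1)) :
    Tendsto (gr (a - 1)) atTop (𝓝 1) := by
  have hq : Tendsto (fun x : ℝ => x / (x + a - 1) * gr a x) atTop (𝓝 1) := by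
    have h1 : Tendsto (fun x : ℝ => x / (x + (a - 1))) atTop (𝓝 1) := tendsto_div_add_const _
    have h1' : Tendsto (fun x : ℝ => x / (x + a - 1)) atTop (𝓝 1) := by
      refine h1.congr fun x => by ring_nf
    simpa using h1'.mul h
  refine hq.congr' ?_
  filter_upwards [eventually_gt_atTop (max 0 (-a+2))] with x hx
  have hx0 : 0 < x := lt_of_le_of_lt (le_max_left _ _) hx
  have hxa : 0 < x + a - 1 := by have := lt_of_le_of_lt (le_max_right _ _) hx; linarith
  have hG : 0 < Real.Gamma x := Real.Gamma_pos_of_pos hx0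
  have e1 : Real.Gamma (x + a) = (x + a - 1) * Real.Gamma (x + (a - 1)) := by
    rw [show x + a = (x + (a-1)) + 1 by ring, Real.Gamma_add_one (by linarith : x + (a-1) ≠ 0)]
    ring_nf
  have e2 : x ^ a = x ^ (a - 1) * x := by
    rw [← Real.rpow_add_one hx0.ne']; ring_nf
  rw [gr, gr, e1, e2]
  have hGa1 : 0 < Real.Gamma (x + (a - 1)) := Real.Gamma_pos_of_pos (by linarith)
  have hxp : 0 < x ^ (a-1) := Real.rpow_pos_of_pos hx0 _
  field_simp

lemma tendsto_gr (a : ℝ) : Tendsto (gr a) atTop (𝓝 1) := by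
  have key : ∀ (n : ℤ) (b : ℝ), b ∈ Set.Icc (0:ℝ) 1 → Tendsto (gr (b + n)) atTop (𝓝 1) := by
    intro n
    induction n using Int.induction_on with
    | zero => intro b hb; simpa using tendsto_gr_base hb
    | succ k ih =>
      intro b hb
      have := tendsto_gr_succ (ih b hb)
      convert this using 2
      push_cast; ring
    | pred k ih =>
      intro b hb
      have := tendsto_gr_pred (ih b hb)
      convert this using 2
      push_cast; ring
  have := key ⌊a⌋ (Int.fract a) ⟨Int.fract_nonneg a, (Int.fract_lt_one a).le⟩
  have e : Int.fract a + (⌊a⌋ : ℝ) = a := by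
    rw [Int.fract]; ring
  rwa [e] at this

lemma tendsto_gamma_ratio4 (p q r s : ℝ) :
    Tendsto (fun x : ℝ => Real.Gamma (p + x) * Real.Gamma (q + x) /
      (Real.Gamma (r + x) * Real.Gamma (s + x)) * x ^ (r + s - p - q)) atTop (𝓝 1) := by
  have h0 : Tendsto (fun x => gr p x * gr q x / (gr r x * gr s x)) atTop (𝓝 1) := by
    have := ((tendsto_gr p).mul (tendsto_gr q)).div
      ((tendsto_gr r).mul (tendsto_gr s)) (by norm_num)
    rw [mul_one, div_one] at this
    exact this
  refine h0.congr' ?_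
  filter_upwards [eventually_gt_atTop (max 1 (max (-r+1) (-s+1)))] with x hx
  have hx0 : 0 < x := lt_of_le_of_lt (by simp) hx
  have hxr : 0 < r + x := by
    have := lt_of_le_of_lt ((le_max_left _ _).trans (le_max_right _ _)) hx; linarith
  have hxs : 0 < s + x := by
    have := lt_of_le_of_lt ((le_max_right _ _).trans (le_max_right _ _)) hx; linarith
  have hG : 0 < Real.Gamma x := Real.Gamma_pos_of_pos hx0
  have hGr : 0 < Real.Gamma (x + r) := Real.Gamma_pos_of_pos (by linarith)
  have hGs : 0 < Real.Gamma (x + s) := Real.Gamma_pos_of_pos (by linarith)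
  have hrp : ∀ a : ℝ, (0:ℝ) < x ^ a := fun a => Real.rpow_pos_of_pos hx0 a
  have hsplit : x ^ (r + s - p - q) = x ^ r * x ^ s / (x ^ p * x ^ q) := by
    rw [show r + s - p - q = r + s - (p + q) by ring, Real.rpow_sub hx0, Real.rpow_add hx0,
      Real.rpow_add hx0]
  simp only [gr]
  rw [hsplit, show p + x = x + p by ring, show q + x = x + q by ring,
    show r + x = x + r by ring, show s + x = x + s by ring]
  field_simp

lemma tendsto_gamma_ratio4_nat (p q r s : ℝ) :
    Tendsto (fun k : ℕ => Real.Gamma (p + k) * Real.Gamma (q + k) /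
      (Real.Gamma (r + k) * Real.Gamma (s + k)) * (k:ℝ) ^ (r + s - p - q)) atTop (𝓝 1) :=
  (tendsto_gamma_ratio4 p q r s).comp tendsto_natCast_atTop_atTop

lemma pochQuot_eq_gammaQuot {p q r s : ℝ} (hp : 0 < p) (hq : 0 < q) (hr : 0 < r) (hs : 0 < s)
    (k : ℕ) : poch p k * poch q k / (poch r k * poch s k) =
      (Real.Gamma r * Real.Gamma s / (Real.Gamma p * Real.Gamma q)) *
      (Real.Gamma (p + k) * Real.Gamma (q + k) / (Real.Gamma (r + k) * Real.Gamma (s + k))) := by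
  rw [Gamma_poch hp, Gamma_poch hq, Gamma_poch hr, Gamma_poch hs]
  have h1 := (Real.Gamma_pos_of_pos hp).ne'
  have h2 := (Real.Gamma_pos_of_pos hq).ne'
  have h3 := (Real.Gamma_pos_of_pos hr).ne'
  have h4 := (Real.Gamma_pos_of_pos hs).ne'
  have h5 := (poch_pos hr k).ne'
  have h6 := (poch_pos hs k).ne'
  field_simp

lemma summable_pochQuot_pos {p q r s : ℝ} (hp : 0 < p) (hq : 0 < q) (hr : 0 < r) (hs : 0 < s)
    (h : p + q + 1 < r + s) :
    Summable (fun k : ℕ => poch p k * poch q k / (poch r k * poch s k)) := by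
  set e := r + s - p - q with he
  set g : ℕ → ℝ := fun k => Real.Gamma (p + k) * Real.Gamma (q + k) /
      (Real.Gamma (r + k) * Real.Gamma (s + k)) with hg
  have hsumg : Summable g := by
    have hO1 : (fun k : ℕ => g k * (k:ℝ) ^ e) =O[atTop] (fun _ : ℕ => (1:ℝ)) :=
      (tendsto_gamma_ratio4_nat p q r s).isBigO_one ℝ
    have hEq : (fun k : ℕ => g k) =ᶠ[atTop] (fun k => (g k * (k:ℝ) ^ e) * (k:ℝ) ^ (-e)) := by
      filter_upwards [eventually_gt_atTop 0] with k hk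
      have hk0 : (0:ℝ) < k := by exact_mod_cast hk
      rw [mul_assoc, ← Real.rpow_add hk0]
      simp
    have hO : (fun k : ℕ => g k) =O[atTop] (fun k : ℕ => (k:ℝ) ^ (-e)) := by
      refine hEq.trans_isBigO ?_
      simpa using hO1.mul (Asymptotics.isBigO_refl (fun k : ℕ => (k:ℝ) ^ (-e)) atTop)
    exact summable_of_isBigO_nat (Real.summable_nat_rpow.mpr (by rw [he]; linarith)) hO
  have := hsumg.mul_left (Real.Gamma r * Real.Gamma s / (Real.Gamma p * Real.Gamma q))
  exact this.congr fun k => (pochQuot_eq_gammaQuot hp hq hr hs k).symm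

lemma tendsto_pochQuot_zero_pos {p q r s : ℝ} (hp : 0 < p) (hq : 0 < q) (hr : 0 < r) (hs : 0 < s)
    (h : p + q < r + s) :
    Tendsto (fun k : ℕ => poch p k * poch q k / (poch r k * poch s k)) atTop (𝓝 0) := by
  set e := r + s - p - q with he
  set g : ℕ → ℝ := fun k => Real.Gamma (p + k) * Real.Gamma (q + k) /
      (Real.Gamma (r + k) * Real.Gamma (s + k)) with hg
  have hg0 : Tendsto g atTop (𝓝 0) := by
    have h2 : Tendsto (fun k : ℕ => (k:ℝ) ^ (-e)) atTop (𝓝 0) :=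
      (tendsto_rpow_neg_atTop (by rw [he]; linarith)).comp tendsto_natCast_atTop_atTop
    have h3 := (tendsto_gamma_ratio4_nat p q r s).mul h2
    rw [mul_zero] at h3
    refine h3.congr' ?_
    filter_upwards [eventually_gt_atTop 0] with k hk
    have hk0 : (0:ℝ) < k := by exact_mod_cast hk
    rw [mul_assoc, ← Real.rpow_add hk0]
    simp [he, hg]
  have := hg0.const_mul (Real.Gamma r * Real.Gamma s / (Real.Gamma p * Real.Gamma q))
  rw [mul_zero] at this
  exact this.congr fun k => (pochQuot_eq_gammaQuot hp hq hr hs k).symm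

lemma shift_poch_abs {u : ℝ} (K : ℕ) (hu : 0 < u + K) (k : ℕ) :
    |poch u (K + k)| = |poch u K| * poch (u + K) k := by
  rw [poch_add, abs_mul, abs_of_pos (poch_pos hu k)]

lemma summable_abs_pochQuot {u v r s : ℝ} (hr : 0 < r) (hs : 0 < s) (h : u + v + 1 < r + s) :
    Summable (fun k : ℕ => |poch u k * poch v k| / (poch r k * poch s k)) := by
  obtain ⟨K, hKu, hKv⟩ : ∃ K : ℕ, 0 < u + K ∧ 0 < v + K := by
    obtain ⟨K, hK⟩ := exists_nat_gt (max (-u) (-v))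
    exact ⟨K, by have := (le_max_left (-u) (-v)).trans_lt hK; linarith,
      by have := (le_max_right (-u) (-v)).trans_lt hK; linarith⟩
  rw [← summable_nat_add_iff K]
  have core := summable_pochQuot_pos hKu hKv (by positivity : (0:ℝ) < r + K)
    (by positivity : (0:ℝ) < s + K) (by push_cast; linarith)
  have hS := core.mul_left (|poch u K| * |poch v K| / (poch r K * poch s K))
  have hfun : ∀ k : ℕ, |poch u K| * |poch v K| / (poch r K * poch s K) *
      (poch (u + K) k * poch (v + K) k / (poch (r + K) k * poch (s + K) k)) =
      |poch u (k + K) * poch v (k + K)| / (poch r (k + K) * poch s (k + K)) := by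
    intro k
    rw [show k + K = K + k from add_comm _ _]
    rw [abs_mul, shift_poch_abs K hKu, shift_poch_abs K hKv, poch_add r, poch_add s]
    have h1 := (poch_pos hr K).ne'
    have h2 := (poch_pos hs K).ne'
    have h3 := (poch_pos (by positivity : (0:ℝ) < r + K) k).ne'
    have h4 := (poch_pos (by positivity : (0:ℝ) < s + K) k).ne'
    field_simp
  exact hS.congr hfun

lemma tendsto_abs_pochQuot_zero {u v r s : ℝ} (hr : 0 < r) (hs : 0 < s) (h : u + v < r + s) :
    Tendsto (fun k : ℕ => |poch u k * poch v k| / (poch r k * poch s k)) atTop (𝓝 0) := by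
  obtain ⟨K, hKu, hKv⟩ : ∃ K : ℕ, 0 < u + K ∧ 0 < v + K := by
    obtain ⟨K, hK⟩ := exists_nat_gt (max (-u) (-v))
    exact ⟨K, by have := (le_max_left (-u) (-v)).trans_lt hK; linarith,
      by have := (le_max_right (-u) (-v)).trans_lt hK; linarith⟩
  rw [← tendsto_add_atTop_iff_nat K]
  have core := tendsto_pochQuot_zero_pos hKu hKv (by positivity : (0:ℝ) < r + K)
    (by positivity : (0:ℝ) < s + K) (by push_cast; linarith)
  have hT := core.const_mul (|poch u K| * |poch v K| / (poch r K * poch s K))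
  rw [mul_zero] at hT
  have hfun : ∀ k : ℕ, |poch u K| * |poch v K| / (poch r K * poch s K) *
      (poch (u + K) k * poch (v + K) k / (poch (r + K) k * poch (s + K) k)) =
      |poch u (k + K) * poch v (k + K)| / (poch r (k + K) * poch s (k + K)) := by
    intro k
    rw [show k + K = K + k from add_comm _ _]
    rw [abs_mul, shift_poch_abs K hKu, shift_poch_abs K hKv, poch_add r, poch_add s]
    have h1 := (poch_pos hr K).ne'
    have h2 := (poch_pos hs K).ne'
    have h3 := (poch_pos (by positivity : (0:ℝ) < r + K) k).ne'
    have h4 := (poch_pos (by positivity : (0:ℝ) < s + K) k).ne'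
    field_simp
  exact hT.congr hfun

noncomputable def Fg (α β c : ℝ) : ℝ :=
  ∑' k : ℕ, poch α k * poch β k / ((k.factorial : ℝ) * poch c k)

lemma summable_Fg_abs {α β c : ℝ} (hc : 0 < c) (h : α + β < c) :
    Summable (fun k : ℕ => |poch α k * poch β k| / ((k.factorial : ℝ) * poch c k)) := by
  have := summable_abs_pochQuot (u := α) (v := β) one_pos hc (by linarith)
  exact this.congr fun k => by rw [poch_one]

lemma summable_Fg {α β c : ℝ} (hc : 0 < c) (h : α + β < c) :
    Summable (fun k : ℕ => poch α k * poch β k / ((k.factorial : ℝ) * poch c k)) := by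
  have h1 : Summable (fun k : ℕ => |poch α k * poch β k / ((k.factorial : ℝ) * poch c k)|) := by
    refine (summable_Fg_abs hc h).congr fun k => ?_
    have hp := poch_pos hc k
    have hf : (0:ℝ) < (k.factorial : ℝ) := by positivity
    rw [abs_div, abs_of_pos (mul_pos hf hp)]
  exact h1.of_abs

-- telescoping weight
noncomputable def wtel (α β c : ℝ) (k : ℕ) : ℝ :=
  k * (c + k) * (poch α k * poch β k / ((k.factorial : ℝ) * poch (c+1) k))

lemma wtel_succ {α β c : ℝ} (hc : 0 < c) (k : ℕ) :
    wtel α β c (k+1) = poch α (k+1) * poch β (k+1) / ((k.factorial : ℝ) * poch (c+1) k) := by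
  have h1 : ((k+1).factorial : ℝ) = (k+1) * k.factorial := by
    rw [Nat.factorial_succ]; push_cast; ring
  have h2 : poch (c+1) (k+1) = poch (c+1) k * (c+1+k) := poch_succ _ _
  have h3 := (poch_pos (by linarith : (0:ℝ) < c+1) k).ne'
  have h4 : (k.factorial : ℝ) ≠ 0 := by positivity
  have h5 : (0:ℝ) < c+1+k := by positivity
  rw [wtel, h1, h2]
  push_cast
  field_simp
  ring

lemma tendsto_wtel_zero {α β c : ℝ} (hc : 0 < c) (h : α + β < c) :
    Tendsto (wtel α β c) atTop (𝓝 0) := by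
  rw [← tendsto_add_atTop_iff_nat 1]
  have habs : Tendsto (fun k : ℕ =>
      |α * β| * (|poch (α+1) k * poch (β+1) k| / (poch 1 k * poch (c+1) k))) atTop (𝓝 0) := by
    have := (tendsto_abs_pochQuot_zero (u := α+1) (v := β+1) one_pos
      (by linarith : (0:ℝ) < c+1) (by linarith)).const_mul (|α * β|)
    simpa using this
  have hb : ∀ k : ℕ, ‖wtel α β c (k+1)‖ ≤
      |α * β| * (|poch (α+1) k * poch (β+1) k| / (poch 1 k * poch (c+1) k)) := by
    intro k
    rw [Real.norm_eq_abs, wtel_succ hc, poch_succ_left α, poch_succ_left β, poch_one]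
    have h3 : (0:ℝ) < (k.factorial : ℝ) * poch (c+1) k := by
      have := poch_pos (by linarith : (0:ℝ) < c+1) k
      positivity
    rw [abs_div, abs_of_pos h3]
    rw [show α * poch (α+1) k * (β * poch (β+1) k) = (α*β) * (poch (α+1) k * poch (β+1) k) by ring]
    rw [abs_mul, mul_div_assoc]
  exact squeeze_zero_norm hb habs

lemma contig {α β c : ℝ} (hc : 0 < c) (h : α + β < c) :
    c * (c - α - β) * Fg α β c = (c - α) * (c - β) * Fg α β (c+1) := by
  set u1 : ℕ → ℝ := fun k => poch α k * poch β k / ((k.factorial : ℝ) * poch c k) with hu1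
  set u2 : ℕ → ℝ := fun k => poch α k * poch β k / ((k.factorial : ℝ) * poch (c+1) k) with hu2
  have hs1 : Summable u1 := summable_Fg hc h
  have hs2 : Summable u2 := summable_Fg (by linarith) (by linarith)
  have key : ∀ k : ℕ, c * (c - α - β) * u1 k - (c - α) * (c - β) * u2 k =
      wtel α β c k - wtel α β c (k+1) := by
    intro k
    have hrel : poch c k = c * poch (c+1) k / (c + k) := by
      have h1 : poch c k * (c + k) = c * poch (c+1) k := by
        rw [← poch_succ, poch_succ_left]
      have h2 : (0:ℝ) < c + k := by positivity
      field_simp [h2.ne'] at h1 ⊢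
      linarith [h1]
    rw [wtel_succ hc, hu1, hu2, wtel]
    simp only []
    rw [hrel, poch_succ α, poch_succ β]
    have h2 : (0:ℝ) < c + k := by positivity
    have h3 := (poch_pos (by linarith : (0:ℝ) < c+1) k).ne'
    have h4 : (k.factorial : ℝ) ≠ 0 := by positivity
    field_simp
    ring
  have hTsum : Summable (fun k => c * (c - α - β) * u1 k - (c - α) * (c - β) * u2 k) :=
    ((hs1.mul_left _).sub (hs2.mul_left _))
  have htel : (∑' k, (c * (c - α - β) * u1 k - (c - α) * (c - β) * u2 k)) = 0 := by
    have hTsum' : Summable (fun k => wtel α β c k - wtel α β c (k+1)) :=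
      hTsum.congr fun k => key k
    have hps := hTsum'.hasSum.tendsto_sum_nat
    have hps2 : Tendsto (fun n => ∑ i ∈ Finset.range n,
        (wtel α β c i - wtel α β c (i+1))) atTop (𝓝 (wtel α β c 0 - 0)) := by
      have := (tendsto_const_nhds (x := wtel α β c 0) (f := atTop (α := ℕ))).sub
        (tendsto_wtel_zero hc h)
      refine this.congr fun n => ?_
      rw [Finset.sum_range_sub' (wtel α β c) n]
    have := tendsto_nhds_unique hps hps2
    have hw0 : wtel α β c 0 = 0 := by simp [wtel]
    rw [tsum_congr key, this, hw0, sub_zero]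
  have e1 : (∑' k, (c * (c - α - β) * u1 k - (c - α) * (c - β) * u2 k)) =
      c * (c - α - β) * Fg α β c - (c - α) * (c - β) * Fg α β (c+1) := by
    rw [Summable.tsum_sub (hs1.mul_left _) (hs2.mul_left _), tsum_mul_left, tsum_mul_left]
    rfl
  rw [e1] at htel
  linarith [htel]

lemma tendsto_Fg_one {α β c : ℝ} (hc : 0 < c) (h : α + β < c) :
    Tendsto (fun m : ℕ => Fg α β (c + m)) atTop (𝓝 1) := by
  have hbound : Summable (fun k : ℕ =>
      |poch α k * poch β k| / ((k.factorial : ℝ) * poch (c+1) k)) :=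
    summable_Fg_abs (by linarith) (by linarith)
  have hg : (∑' k : ℕ, (if k = 0 then (1:ℝ) else 0)) = 1 := tsum_ite_eq 0 1
  have main := tendsto_tsum_of_dominated_convergence (𝓕 := atTop (α := ℕ))
    (f := fun m k => poch α k * poch β k / ((k.factorial : ℝ) * poch (c + m) k))
    (g := fun k => if k = 0 then (1:ℝ) else 0)
    (bound := fun k => |poch α k * poch β k| / ((k.factorial : ℝ) * poch (c+1) k))
    hbound ?_ ?_
  · rw [hg] at main
    exact main
  · intro k
    rcases Nat.eq_zero_or_pos k with rfl | hk
    · simpa [poch_zero] using tendsto_const_nhds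
    · obtain ⟨j, rfl⟩ := Nat.exists_eq_add_of_lt hk
      simp only [zero_add]
      have hden : Tendsto (fun m : ℕ => ((j+1).factorial : ℝ) * poch (c + m) (j+1))
          atTop atTop := by
        have hge : ∀ m : ℕ, (c + m) * poch (c+1) j ≤ poch (c + m) (j+1) := by
          intro m
          rw [poch_succ_left]
          have h1 : (0:ℝ) < c + m := by positivity
          exact mul_le_mul_of_nonneg_left
            (poch_le_poch (by linarith) (by push_cast; linarith) j) h1.le
        have h2 : Tendsto (fun m : ℕ => (c + m) * poch (c+1) j) atTop atTop := by
          have hcm : Tendsto (fun m : ℕ => c + (m:ℝ)) atTop atTop :=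
            tendsto_atTop_add_const_left _ c tendsto_natCast_atTop_atTop
          exact hcm.atTop_mul_const (poch_pos (by linarith) j)
        have h3 : Tendsto (fun m : ℕ => poch (c + m) (j+1)) atTop atTop :=
          tendsto_atTop_mono hge h2
        exact Tendsto.const_mul_atTop (by positivity) h3
      have := Tendsto.div_atTop
        (tendsto_const_nhds (x := poch α (j+1) * poch β (j+1)) (f := atTop (α := ℕ))) hden
      simpa using this
  · filter_upwards [eventually_ge_atTop 1] with m hm
    intro k
    have hp1 : 0 < poch (c+1) k := poch_pos (by linarith) k
    have hpm : 0 < poch (c + m) k := poch_pos (by positivity) k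
    have hle : poch (c+1) k ≤ poch (c + m) k := by
      refine poch_le_poch (by linarith) ?_ k
      have : (1:ℝ) ≤ (m:ℝ) := by exact_mod_cast hm
      linarith
    have hf : (0:ℝ) < (k.factorial : ℝ) := by positivity
    rw [Real.norm_eq_abs, abs_div, abs_of_pos (mul_pos hf hpm)]
    apply div_le_div_of_nonneg_left (abs_nonneg _) (mul_pos hf hp1)
    have hkf : (1:ℝ) ≤ (k.factorial:ℝ) := by exact_mod_cast k.factorial_pos
    nlinarith [hle, hp1, hkf]

theorem gauss_sum {α β c : ℝ} (hc : 0 < c) (hca : α < c) (hcb : β < c) (hs : α + β < c) :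
    Fg α β c = Real.Gamma c * Real.Gamma (c-α-β) / (Real.Gamma (c-α) * Real.Gamma (c-β)) := by
  set Q : ℕ → ℝ := fun m => Fg α β (c + m) *
    (Real.Gamma (c-α + m) * Real.Gamma (c-β + m)) /
    (Real.Gamma (c + m) * Real.Gamma (c-α-β + m)) with hQ
  have hQstep : ∀ m : ℕ, Q (m+1) = Q m := by
    intro m
    have h1 : (0:ℝ) < c + m := by positivity
    have h2 : (0:ℝ) < c - α + m := by have : (0:ℝ) ≤ (m:ℝ) := Nat.cast_nonneg m; linarith
    have h3 : (0:ℝ) < c - β + m := by have : (0:ℝ) ≤ (m:ℝ) := Nat.cast_nonneg m; linarith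
    have h4 : (0:ℝ) < c - α - β + m := by have : (0:ℝ) ≤ (m:ℝ) := Nat.cast_nonneg m; linarith
    have hcont := contig (α := α) (β := β) (c := c + m) h1 (by linarith)
    have e0 : ∀ x : ℝ, x + ((m:ℝ)+1) = (x + m) + 1 := fun x => by ring
    have eΓ1 : Real.Gamma (c + ((m:ℝ)+1)) = (c + m) * Real.Gamma (c + m) := by
      rw [e0, Real.Gamma_add_one h1.ne']
    have eΓ2 : Real.Gamma (c - α + ((m:ℝ)+1)) = (c - α + m) * Real.Gamma (c - α + m) := by
      rw [e0, Real.Gamma_add_one h2.ne']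
    have eΓ3 : Real.Gamma (c - β + ((m:ℝ)+1)) = (c - β + m) * Real.Gamma (c - β + m) := by
      rw [e0, Real.Gamma_add_one h3.ne']
    have eΓ4 : Real.Gamma (c - α - β + ((m:ℝ)+1)) = (c - α - β + m) * Real.Gamma (c - α - β + m) := by
      rw [e0, Real.Gamma_add_one h4.ne']
    have eF : Fg α β (c + ((m:ℝ)+1)) = Fg α β ((c + m) + 1) := by rw [e0]
    have hG1 := (Real.Gamma_pos_of_pos h1).ne'
    have hG2 := (Real.Gamma_pos_of_pos h2).ne'
    have hG3 := (Real.Gamma_pos_of_pos h3).ne'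
    have hG4 := (Real.Gamma_pos_of_pos h4).ne'
    rw [hQ]
    simp only []
    push_cast
    rw [eΓ1, eΓ2, eΓ3, eΓ4, eF]
    have hcont' : Fg α β ((c+m)+1) = (c + m) * (c + m - α - β) * Fg α β (c + m) /
        ((c + m - α) * (c + m - β)) := by
      have hne1 : c + m - α ≠ 0 := by linarith
      have hne2 : c + m - β ≠ 0 := by linarith
      field_simp
      linarith [hcont]
    rw [hcont']
    have hne1 : c + m - α ≠ 0 := by linarith
    have hne2 : c + m - β ≠ 0 := by linarith
    have hne4 : c - α - β + m ≠ 0 := h4.ne'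
    field_simp
    ring
  have hQconst : ∀ m, Q m = Q 0 := by
    intro m
    induction m with
    | zero => rfl
    | succ n ih => rw [hQstep n, ih]
  have hQlim : Tendsto Q atTop (𝓝 1) := by
    have hγ : Tendsto (fun m : ℕ => (Real.Gamma (c-α + m) * Real.Gamma (c-β + m)) /
        (Real.Gamma (c + m) * Real.Gamma (c-α-β + m))) atTop (𝓝 1) := by
      have := tendsto_gamma_ratio4_nat (c-α) (c-β) c (c-α-β)
      have he : c + (c-α-β) - (c-α) - (c-β) = 0 := by ring
      rw [he] at this
      refine this.congr' ?_
      filter_upwards [eventually_gt_atTop 0] with m hm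
      rw [Real.rpow_zero, mul_one]
    have := (tendsto_Fg_one hc hs).mul hγ
    rw [mul_one] at this
    refine this.congr fun m => ?_
    simp only [hQ]
    ring
  have hQ0 : Q 0 = 1 := by
    have h1 : Tendsto Q atTop (𝓝 (Q 0)) := by
      refine tendsto_const_nhds.congr fun m => (hQconst m).symm
    exact tendsto_nhds_unique h1 hQlim
  have hQ0' : Fg α β c * (Real.Gamma (c-α) * Real.Gamma (c-β)) /
      (Real.Gamma c * Real.Gamma (c-α-β)) = 1 := by
    have := hQ0
    rw [hQ] at this
    simpa using this
  have hG1 := (Real.Gamma_pos_of_pos hc).ne'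
  have hG2 := (Real.Gamma_pos_of_pos (by linarith : (0:ℝ) < c - α)).ne'
  have hG3 := (Real.Gamma_pos_of_pos (by linarith : (0:ℝ) < c - β)).ne'
  have hG4 := (Real.Gamma_pos_of_pos (by linarith : (0:ℝ) < c - α - β)).ne'
  field_simp at hQ0' ⊢
  linarith [hQ0']

-- ratio-test helpers
lemma tendsto_linear_ratio (a b : ℝ) :
    Tendsto (fun n : ℕ => (a + n) / (b + n)) atTop (𝓝 1) := by
  have hb : Tendsto (fun n : ℕ => b + (n:ℝ)) atTop atTop :=
    tendsto_atTop_add_const_left _ b tendsto_natCast_atTop_atTop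
  have h0 : Tendsto (fun n : ℕ => (a - b) / (b + (n:ℝ))) atTop (𝓝 0) :=
    Tendsto.div_atTop tendsto_const_nhds hb
  have h1 : Tendsto (fun n : ℕ => 1 + (a - b) / (b + (n:ℝ))) atTop (𝓝 1) := by
    simpa using (tendsto_const_nhds (x := (1:ℝ))).add h0
  refine h1.congr' ?_
  filter_upwards [hb.eventually_gt_atTop 0] with n hn
  field_simp
  ring

lemma tendsto_abs_linear_ratio (a b : ℝ) :
    Tendsto (fun n : ℕ => |a + n| / (b + n)) atTop (𝓝 1) := by
  refine (tendsto_linear_ratio a b).congr' ?_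
  have hb : Tendsto (fun n : ℕ => a + (n:ℝ)) atTop atTop :=
    tendsto_atTop_add_const_left _ a tendsto_natCast_atTop_atTop
  filter_upwards [hb.eventually_gt_atTop 0] with n hn
  rw [abs_of_pos hn]

lemma summable_ratio_lemma {f ρ : ℕ → ℝ} {x : ℝ} (hx0 : 0 ≤ x) (hx : x < 1)
    (hρ : Tendsto ρ atTop (𝓝 x)) (hf : ∀ n, |f (n+1)| = ρ n * |f n|) : Summable f := by
  have hr1 : (x+1)/2 < 1 := by linarith
  refine summable_of_ratio_norm_eventually_le hr1 ?_
  have hev : ∀ᶠ n in atTop, ρ n ≤ (x+1)/2 := by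
    have : Iio ((x+1)/2) ∈ 𝓝 x := Iio_mem_nhds (by linarith)
    filter_upwards [hρ this] with n hn
    exact le_of_lt hn
  filter_upwards [hev] with n hn
  rw [Real.norm_eq_abs, Real.norm_eq_abs, hf n]
  exact mul_le_mul_of_nonneg_right hn (abs_nonneg _)

lemma summable_D_abs (a b : ℝ) {x : ℝ} (hx0 : 0 ≤ x) (hx : x < 1) :
    Summable (fun k : ℕ => |poch a k * poch b k / (poch 2 k * (k.factorial : ℝ)) * x ^ k|) := by
  set ρ : ℕ → ℝ := fun k => |a + k| * |b + k| * x / ((2 + k) * (1 + k)) with hρdef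
  have hρ : Tendsto ρ atTop (𝓝 x) := by
    have h1 := (tendsto_abs_linear_ratio a 2).mul (tendsto_abs_linear_ratio b 1)
    rw [mul_one] at h1
    have h2 := h1.mul_const x
    rw [one_mul] at h2
    refine h2.congr fun n => ?_
    rw [hρdef]
    have hn1 : (0:ℝ) < 2 + n := by positivity
    have hn2 : (0:ℝ) < 1 + n := by positivity
    field_simp
  refine summable_ratio_lemma hx0 hx hρ ?_
  intro k
  have hp2 : 0 < poch 2 k := poch_pos two_pos k
  have hf : (0:ℝ) < (k.factorial : ℝ) := by positivity
  have h1 : (0:ℝ) < 2 + k := by positivity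
  have h2 : (0:ℝ) < 1 + k := by positivity
  rw [_root_.abs_abs, _root_.abs_abs, poch_succ a, poch_succ b, poch_succ 2, Nat.factorial_succ]
  push_cast
  rw [hρdef]
  simp only [abs_mul, abs_div, abs_pow]
  rw [_root_.abs_of_pos hp2, _root_.abs_of_pos hf, _root_.abs_of_pos h1,
    show |(k:ℝ)+1| = 1+(k:ℝ) from by rw [_root_.abs_of_nonneg (by positivity)]; ring,
    _root_.abs_of_nonneg hx0, pow_succ]
  field_simp

lemma summable_binom_abs (a : ℝ) (ha : 0 < a) {x : ℝ} (hx0 : 0 ≤ x) (hx : x < 1) :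
    Summable (fun n : ℕ => poch a n / (n.factorial : ℝ) * x ^ n) := by
  set ρ : ℕ → ℝ := fun n => (a + n) * x / (1 + n) with hρdef
  have hρ : Tendsto ρ atTop (𝓝 x) := by
    have h1 := (tendsto_linear_ratio a 1).mul_const x
    rw [one_mul] at h1
    refine h1.congr fun n => ?_
    rw [hρdef]; ring
  refine summable_ratio_lemma hx0 hx hρ ?_
  intro n
  have hp : 0 < poch a n := poch_pos ha n
  have hp1 : 0 < poch a (n+1) := poch_pos ha (n+1)
  have hf : (0:ℝ) < (n.factorial : ℝ) := by positivity
  have h2 : (0:ℝ) < 1 + n := by positivity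
  have h3 : (0:ℝ) < a + n := by positivity
  rw [_root_.abs_of_nonneg (by positivity), _root_.abs_of_nonneg (by positivity), poch_succ a,
    Nat.factorial_succ, hρdef]
  push_cast
  rw [pow_succ]
  field_simp
  ring

-- Beta integral in poch form
lemma beta_poch {p : ℝ} (hp : 0 < p) (k : ℕ) :
    ∫ t in (0:ℝ)..1, t ^ (p-1) * (1-t)^k = (k.factorial : ℝ) / poch p (k+1) := by
  have hre1 : 0 < (Complex.ofReal p).re := by simpa using hp
  have hre2 : 0 < ((k:ℂ) + 1).re := by
    simp [Complex.add_re]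
    positivity
  have hBC := Complex.Gamma_mul_Gamma_eq_betaIntegral hre1 hre2
  have heq : Complex.betaIntegral (p:ℂ) ((k:ℂ)+1)
      = ((∫ t in (0:ℝ)..1, t ^ (p-1) * (1-t)^k : ℝ) : ℂ) := by
    rw [Complex.betaIntegral, ← intervalIntegral.integral_ofReal]
    refine intervalIntegral.integral_congr fun x hx => ?_
    have hx0 : (0:ℝ) ≤ x := by
      rcases Set.mem_uIcc.mp hx with h | h
      · exact h.1
      · linarith [h.1, h.2]
    have e1 : (x:ℂ) ^ ((p:ℂ) - 1) = ((x ^ (p-1) : ℝ) : ℂ) := by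
      rw [Complex.ofReal_cpow hx0]
      push_cast
      ring_nf
    have e2 : ((1:ℂ) - (x:ℂ)) ^ ((k:ℂ) + 1 - 1) = (((1-x)^k : ℝ) : ℂ) := by
      rw [show (k:ℂ) + 1 - 1 = ((k:ℕ):ℂ) by ring, Complex.cpow_natCast]
      push_cast
      ring
    rw [e1, e2]
    push_cast
    ring
  rw [heq] at hBC
  have hg1 : Complex.Gamma (p:ℂ) = ((Real.Gamma p : ℝ) : ℂ) := Complex.Gamma_ofReal p
  have hg2 : Complex.Gamma ((k:ℂ)+1) = ((k.factorial : ℝ) : ℂ) := by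
    rw [show ((k:ℂ)+1) = ((k:ℕ):ℂ) + 1 by norm_num, Complex.Gamma_nat_eq_factorial]
    push_cast
    ring
  have hg3 : Complex.Gamma ((p:ℂ) + ((k:ℂ)+1)) = ((Real.Gamma (p + (k+1)) : ℝ) : ℂ) := by
    rw [show (p:ℂ) + ((k:ℂ)+1) = ((p + (k+1) : ℝ) : ℂ) by push_cast; ring]
    exact Complex.Gamma_ofReal _
  rw [hg1, hg2, hg3] at hBC
  have hBR : Real.Gamma p * k.factorial
      = Real.Gamma (p + (k+1)) * ∫ t in (0:ℝ)..1, t ^ (p-1) * (1-t)^k := by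
    have := hBC
    rw [← Complex.ofReal_mul, ← Complex.ofReal_mul] at this
    exact_mod_cast this
  have hGp := Real.Gamma_pos_of_pos hp
  have hpoch := poch_pos hp (k+1)
  have hGrec : Real.Gamma (p + (k+1)) = Real.Gamma p * poch p (k+1) := by
    have := Gamma_poch hp (k+1)
    push_cast at this ⊢
    exact this
  rw [hGrec] at hBR
  have h2 : (0:ℝ) < Real.Gamma p * poch p (k+1) := by positivity
  field_simp
  nlinarith [hBR]

lemma moment_term_eq {α β s : ℝ} (hs : 0 < s) (k : ℕ) :
    (α * β * (poch (α+1) k * poch (β+1) k / (poch 2 k * (k.factorial : ℝ)))) *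
      ((k.factorial : ℝ) / poch s (k+1)) =
    poch α (k+1) * poch β (k+1) / (((k+1).factorial : ℝ) * poch s (k+1)) := by
  rw [poch_succ_left α, poch_succ_left β, poch_two, Nat.factorial_succ]
  have h1 : (0:ℝ) < (k.factorial : ℝ) := by positivity
  have h2 := poch_pos hs (k+1)
  push_cast
  field_simp

-- series moment identity
lemma moment_sum {α β s : ℝ} (hs : 0 < s) (h : α + β < s) :
    ∑' k : ℕ, (α * β * (poch (α+1) k * poch (β+1) k / (poch 2 k * (k.factorial : ℝ)))) *
      ((k.factorial : ℝ) / poch s (k+1)) = Fg α β s - 1 := by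
  set v : ℕ → ℝ := fun m => poch α m * poch β m / ((m.factorial : ℝ) * poch s m) with hv
  have hterm : ∀ k : ℕ, (α * β * (poch (α+1) k * poch (β+1) k / (poch 2 k * (k.factorial : ℝ)))) *
      ((k.factorial : ℝ) / poch s (k+1)) = v (k+1) := by
    intro k
    rw [hv]
    simp only []
    rw [poch_succ_left α, poch_succ_left β, poch_two, Nat.factorial_succ]
    have h1 : (0:ℝ) < (k.factorial : ℝ) := by positivity
    have h2 := poch_pos hs (k+1)
    push_cast
    field_simp
  rw [tsum_congr hterm]
  have hsum : Summable v := summable_Fg hs h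
  have := Summable.tsum_eq_zero_add hsum
  have hv0 : v 0 = 1 := by simp [hv, poch_zero]
  rw [hv0] at this
  have : ∑' m, v (m+1) = Fg α β s - 1 := by
    rw [Fg, ← hv]
    linarith [this]
  exact this

noncomputable def bcf (σ : ℝ) (n : ℕ) : ℂ := ((poch σ n / n.factorial : ℝ) : ℂ) * (-1)^n

lemma bcf_norm (σ : ℝ) (hσ : 0 < σ) (n : ℕ) : ‖bcf σ n‖ = poch σ n / n.factorial := by
  rw [bcf, norm_mul, norm_pow, norm_neg, norm_one, one_pow, mul_one, Complex.norm_real,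
    Real.norm_eq_abs, _root_.abs_of_nonneg]
  have := poch_pos hσ n
  positivity

lemma bcf_summable_norm (σ : ℝ) (hσ : 0 < σ) {y : ℂ} (hy : ‖y‖ < 1) :
    Summable (fun n : ℕ => ‖bcf σ n * y ^ n‖) := by
  have := summable_binom_abs σ hσ (norm_nonneg y) hy
  refine this.congr fun n => ?_
  rw [norm_mul, norm_pow, bcf_norm σ hσ]

lemma bcf_rec (σ : ℝ) (n : ℕ) : bcf σ (n+1) * ((n:ℂ)+1) = -((σ:ℂ)+n) * bcf σ n := by
  have hre : poch σ (n+1) / ((n+1).factorial : ℝ) * ((n:ℝ)+1) = (σ+n) * (poch σ n / n.factorial) := by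
    rw [poch_succ, Nat.factorial_succ]
    have h1 : (0:ℝ) < (n.factorial : ℝ) := by positivity
    push_cast
    field_simp
  rw [bcf, bcf]
  have : (((poch σ (n+1) / ((n+1).factorial : ℝ)) : ℝ) : ℂ) * ((n:ℂ)+1)
      = (((σ+n) * (poch σ n / n.factorial) : ℝ) : ℂ) := by
    rw [← hre]; push_cast; ring
  calc ((poch σ (n+1) / ((n+1).factorial:ℝ) : ℝ):ℂ) * (-1)^(n+1) * ((n:ℂ)+1)
      = (((poch σ (n+1) / ((n+1).factorial : ℝ)) : ℝ) : ℂ) * ((n:ℂ)+1) * (-1)^(n+1) := by ring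
    _ = (((σ+n) * (poch σ n / n.factorial) : ℝ) : ℂ) * (-1)^(n+1) := by rw [this]
    _ = -((σ:ℂ)+n) * (((poch σ n / n.factorial : ℝ) : ℂ) * (-1)^n) := by
        push_cast
        rw [pow_succ]
        ring

noncomputable def bg (σ : ℝ) : ℂ → ℂ := fun w => ∑' n : ℕ, bcf σ n * w ^ n

lemma bg_hasDerivAt (σ : ℝ) (hσ : 0 < σ) {w : ℂ} (hw : ‖w‖ < 1) :
    HasDerivAt (bg σ) (∑' n : ℕ, bcf σ n * (n * w ^ (n-1))) w := by
  set r : ℝ := (‖w‖ + 1) / 2 with hr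
  have hr0 : 0 < r := by have := norm_nonneg w; rw [hr]; linarith
  have hr1 : r < 1 := by rw [hr]; linarith
  have hwr : ‖w‖ < r := by rw [hr]; linarith
  set u : ℕ → ℝ := fun n => poch σ n / n.factorial * n * r ^ (n-1) with hu
  have hu_sum : Summable u := by
    rw [← summable_nat_add_iff 1]
    have hcore := (summable_binom_abs (σ+1) (by linarith) (le_of_lt hr0) hr1).mul_left σ
    refine hcore.congr fun n => ?_
    rw [hu]
    simp only [Nat.add_sub_cancel]
    rw [poch_succ_left, Nat.factorial_succ]
    have h1 : (0:ℝ) < (n.factorial : ℝ) := by positivity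
    push_cast
    field_simp
  have H := hasDerivAt_tsum_of_isPreconnected hu_sum (Metric.isOpen_ball)
    ((convex_ball (0:ℂ) r).isPreconnected)
    (g := fun n z => bcf σ n * z ^ n) (g' := fun n z => bcf σ n * (n * z ^ (n-1)))
    (y₀ := 0) (y := w)
    (fun n y _ => (hasDerivAt_pow n y).const_mul (bcf σ n)) ?_ ?_ ?_ ?_
  · exact H
  · intro n y hy
    rw [norm_mul, bcf_norm σ hσ, hu]
    simp only [norm_mul, norm_pow]
    have hyr : ‖y‖ ≤ r := by
      rw [Metric.mem_ball, dist_zero_right] at hy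
      exact hy.le
    have h2 : ‖y‖^(n-1) ≤ r^(n-1) := pow_le_pow_left₀ (norm_nonneg y) hyr _
    have h3 : ‖(n:ℂ)‖ = (n:ℝ) := by
      rw [Complex.norm_natCast]
    rw [h3, mul_assoc]
    have h4 : (0:ℝ) ≤ poch σ n / n.factorial := by
      have := poch_pos hσ n
      positivity
    refine mul_le_mul_of_nonneg_left ?_ h4
    exact mul_le_mul_of_nonneg_left h2 (Nat.cast_nonneg n)
  · exact Metric.mem_ball_self hr0
  · refine summable_of_ne_finset_zero (s := {0}) fun n hn => ?_
    have hn0 : n ≠ 0 := by simpa using hn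
    show bcf σ n * (0:ℂ)^n = 0
    rw [zero_pow hn0, mul_zero]
  · rwa [Metric.mem_ball, dist_zero_right]

lemma bg_summable (σ : ℝ) (hσ : 0 < σ) {w : ℂ} (hw : ‖w‖ < 1) :
    Summable (fun n : ℕ => bcf σ n * w ^ n) :=
  (bcf_summable_norm σ hσ hw).of_norm

lemma bg_deriv_summable (σ : ℝ) (hσ : 0 < σ) {w : ℂ} (hw : ‖w‖ < 1) :
    Summable (fun n : ℕ => bcf σ n * (n * w ^ (n-1))) := by
  set r : ℝ := (‖w‖ + 1) / 2 with hr
  have hr0 : 0 < r := by have := norm_nonneg w; rw [hr]; linarith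
  have hr1 : r < 1 := by rw [hr]; linarith
  have hwr : ‖w‖ < r := by rw [hr]; linarith
  refine Summable.of_norm ?_
  have hu_sum : Summable (fun n : ℕ => poch σ n / n.factorial * n * r ^ (n-1)) := by
    rw [← summable_nat_add_iff 1]
    have hcore := (summable_binom_abs (σ+1) (by linarith) (le_of_lt hr0) hr1).mul_left σ
    refine hcore.congr fun n => ?_
    simp only [Nat.add_sub_cancel]
    rw [poch_succ_left, Nat.factorial_succ]
    have h1 : (0:ℝ) < (n.factorial : ℝ) := by positivity
    push_cast
    field_simp
  refine hu_sum.of_nonneg_of_le (fun n => norm_nonneg _) fun n => ?_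
  rw [norm_mul, bcf_norm σ hσ, norm_mul, norm_pow, Complex.norm_natCast, mul_assoc]
  have h4 : (0:ℝ) ≤ poch σ n / n.factorial := by
    have := poch_pos hσ n
    positivity
  refine mul_le_mul_of_nonneg_left ?_ h4
  exact mul_le_mul_of_nonneg_left (pow_le_pow_left₀ (norm_nonneg w) hwr.le _) (Nat.cast_nonneg n)

lemma bg_ode (σ : ℝ) (hσ : 0 < σ) {w : ℂ} (hw : ‖w‖ < 1) :
    (1 + w) * (∑' n : ℕ, bcf σ n * (n * w ^ (n-1))) = -(σ:ℂ) * bg σ w := by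
  set S := ∑' n : ℕ, bcf σ n * (n * w ^ (n-1)) with hS
  have hsum1 : Summable (fun n : ℕ => bcf σ n * (n * w ^ (n-1))) := bg_deriv_summable σ hσ hw
  have hsum0 : Summable (fun n : ℕ => bcf σ n * w ^ n) := bg_summable σ hσ hw
  -- S = ∑' n, bcf σ (n+1) * ((n+1) * w^n)
  have hshift : S = ∑' n : ℕ, bcf σ (n+1) * (((n:ℂ)+1) * w ^ n) := by
    rw [hS, Summable.tsum_eq_zero_add hsum1]
    simp only [Nat.cast_zero, zero_mul, mul_zero, zero_add, Nat.add_sub_cancel]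
    refine tsum_congr fun n => ?_
    push_cast
    ring
  -- w * S = ∑' n, bcf σ n * (n * w^n)
  have hwS : w * S = ∑' n : ℕ, bcf σ n * ((n:ℂ) * w ^ n) := by
    rw [hS, ← tsum_mul_left]
    refine tsum_congr fun n => ?_
    rcases Nat.eq_zero_or_pos n with rfl | hn
    · simp
    · obtain ⟨j, rfl⟩ := Nat.exists_eq_add_of_lt hn
      simp only [zero_add, Nat.add_sub_cancel]
      rw [pow_succ]
      ring
  have hsum2 : Summable (fun n : ℕ => bcf σ (n+1) * (((n:ℂ)+1) * w ^ n)) := by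
    have := (summable_nat_add_iff 1).mpr hsum1
    refine this.congr fun n => ?_
    simp only [Nat.add_sub_cancel]
    push_cast
    ring
  have hsum3 : Summable (fun n : ℕ => bcf σ n * ((n:ℂ) * w ^ n)) := by
    have := hsum0.mul_left w
    rw [show (fun n : ℕ => w * (bcf σ n * w ^ n)) = fun n => bcf σ n * (w * w^n) from
      funext fun n => by ring] at this
    have h2 := hsum1.mul_left w
    refine h2.congr fun n => ?_
    rcases Nat.eq_zero_or_pos n with rfl | hn
    · simp
    · obtain ⟨j, rfl⟩ := Nat.exists_eq_add_of_lt hn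
      simp only [zero_add, Nat.add_sub_cancel]
      rw [pow_succ]
      ring
  have key : (1 + w) * S = S + w * S := by ring
  rw [key, hwS, hshift, ← Summable.tsum_add hsum2 hsum3]
  rw [bg, ← tsum_mul_left]
  refine tsum_congr fun n => ?_
  have := bcf_rec σ n
  calc bcf σ (n+1) * (((n:ℂ)+1) * w ^ n) + bcf σ n * ((n:ℂ) * w ^ n)
      = (bcf σ (n+1) * ((n:ℂ)+1)) * w ^ n + bcf σ n * ((n:ℂ) * w ^ n) := by ring
    _ = (-((σ:ℂ)+n) * bcf σ n) * w ^ n + bcf σ n * ((n:ℂ) * w ^ n) := by rw [this]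
    _ = -(σ:ℂ) * (bcf σ n * w ^ n) := by ring

lemma one_add_ne_zero {w : ℂ} (hw : ‖w‖ < 1) : 1 + w ≠ 0 := by
  intro h
  have : w = -1 := by linear_combination h
  rw [this] at hw
  simp at hw

lemma one_add_mem_slitPlane {w : ℂ} (hw : ‖w‖ < 1) : (1 + w) ∈ Complex.slitPlane := by
  rw [Complex.mem_slitPlane_iff]
  left
  have h1 : |w.re| ≤ ‖w‖ := Complex.abs_re_le_norm w
  have : (1 + w).re = 1 + w.re := by simp
  rw [this]
  have : -1 < w.re := by
    have := neg_abs_le w.re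
    linarith
  linarith

theorem binomial_hasSum {σ : ℝ} (hσ : 0 < σ) {w : ℂ} (hw : ‖w‖ < 1) :
    HasSum (fun n : ℕ => ((poch σ n / n.factorial : ℝ) : ℂ) * (-w)^n) ((1+w) ^ (-(σ:ℂ))) := by
  -- constancy of (1+z)^σ * bg σ z on the unit ball
  set h : ℂ → ℂ := fun z => (1+z) ^ (σ:ℂ) * bg σ z with hh
  have hder : ∀ z ∈ Metric.ball (0:ℂ) 1, HasDerivAt h 0 z := by
    intro z hz
    rw [Metric.mem_ball, dist_zero_right] at hz
    have hne : (1:ℂ) + z ≠ 0 := one_add_ne_zero hz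
    have hd1 : HasDerivAt (fun y : ℂ => (1+y) ^ (σ:ℂ))
        ((σ:ℂ) * (1+z) ^ ((σ:ℂ)-1) * 1) z := by
      have hid : HasDerivAt (fun y : ℂ => 1 + y) 1 z := by
        simpa using (hasDerivAt_id z).const_add (1:ℂ)
      exact HasDerivAt.cpow_const hid (one_add_mem_slitPlane hz)
    have hd2 : HasDerivAt (bg σ) (∑' n : ℕ, bcf σ n * (n * z ^ (n-1))) z :=
      bg_hasDerivAt σ hσ hz
    have hODE := bg_ode σ hσ hz
    have e1 : (1+z) ^ (σ:ℂ) = (1+z) ^ ((σ:ℂ)-1) * (1+z) := by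
      have h2 := Complex.cpow_add (x := 1+z) ((σ:ℂ)-1) 1 hne
      rw [Complex.cpow_one] at h2
      rw [← h2]
      congr 1
      ring
    have hzero : (σ:ℂ) * (1+z) ^ ((σ:ℂ)-1) * 1 * bg σ z +
        (1+z) ^ (σ:ℂ) * (∑' n : ℕ, bcf σ n * (n * z ^ (n-1))) = 0 := by
      rw [e1]
      linear_combination ((1+z) ^ ((σ:ℂ)-1)) * hODE
    have := hd1.mul hd2
    exact this.congr_deriv hzero
  have hconst : ∀ z ∈ Metric.ball (0:ℂ) 1, h z = h 0 := by
    intro z hz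
    have hdiff : DifferentiableOn ℂ h (Metric.ball (0:ℂ) 1) := fun x hx =>
      ((hder x hx).differentiableAt).differentiableWithinAt
    have hfder : ∀ x ∈ Metric.ball (0:ℂ) 1, fderivWithin ℂ h (Metric.ball (0:ℂ) 1) x = 0 := by
      intro x hx
      have hfd : HasFDerivAt h (0 : ℂ →L[ℂ] ℂ) x := by
        have h2 := (hder x hx).hasFDerivAt
        have h3 : (ContinuousLinearMap.toSpanSingleton ℂ (0:ℂ)) = 0 := by
          ext x; simp
        rwa [h3] at h2
      rw [hfd.hasFDerivWithinAt.fderivWithin (Metric.isOpen_ball.uniqueDiffOn x hx)]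
    exact (convex_ball (0:ℂ) 1).is_const_of_fderivWithin_eq_zero hdiff hfder hz
      (Metric.mem_ball_self one_pos)
  have hball : w ∈ Metric.ball (0:ℂ) 1 := by rwa [Metric.mem_ball, dist_zero_right]
  have hg0 : bg σ 0 = 1 := by
    rw [bg]
    rw [tsum_eq_single 0 (fun n hn => by rw [zero_pow hn, mul_zero])]
    simp [bcf, poch_zero]
  have hh0 : h 0 = 1 := by
    rw [hh]
    simp only []
    rw [hg0]
    norm_num
  have hkey : (1+w) ^ (σ:ℂ) * bg σ w = 1 := by
    have h2 := hconst w hball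
    rw [hh0] at h2
    exact h2
  have hne : (1:ℂ) + w ≠ 0 := one_add_ne_zero hw
  have hcne : (1+w) ^ (σ:ℂ) ≠ 0 := by
    intro h0
    rw [h0, zero_mul] at hkey
    exact zero_ne_one hkey
  have hval : bg σ w = (1+w) ^ (-(σ:ℂ)) := by
    rw [Complex.cpow_neg]
    field_simp
    linear_combination hkey
  have hsummable : Summable (fun n : ℕ => ((poch σ n / n.factorial : ℝ) : ℂ) * (-w)^n) := by
    refine (bg_summable σ hσ hw).congr fun n => ?_
    rw [bcf, neg_pow]
    ring
  have := hsummable.hasSum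
  have heq : ∑' n : ℕ, ((poch σ n / n.factorial : ℝ) : ℂ) * (-w)^n = (1+w) ^ (-(σ:ℂ)) := by
    rw [← hval, bg]
    refine tsum_congr fun n => ?_
    rw [bcf, neg_pow]
    ring
  rwa [heq] at this

attribute [irreducible] poch

set_option maxHeartbeats 1000000 in
/-- Representing measure of `₃F₂` in the boundary case `b₁ + b₂ = a₁ + a₂`:
a Dirac atom at `t = 1` plus an absolutely continuous part. -/
theorem stmt15 (σ a₁ a₂ b₁ b₂ : ℝ)
    (hσ : 0 < σ) (ha₁ : 0 < a₁) (ha₂ : 0 < a₂) (hb₁ : 0 < b₁) (hb₂ : 0 < b₂)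
    (hψ : b₁ + b₂ = a₁ + a₂) (z : ℂ) (hz : ‖z‖ < 1) :
    (∑' n : ℕ, ((poch σ n * poch a₁ n * poch a₂ n /
          (poch b₁ n * poch b₂ n * n.factorial) : ℝ) : ℂ) * (-z) ^ n) =
      ((Real.Gamma b₁ * Real.Gamma b₂ / (Real.Gamma a₁ * Real.Gamma a₂) : ℝ) : ℂ) *
        ((1 + z) ^ (-(σ : ℂ)) +
          ∫ t in (0:ℝ)..1,
            (((b₁ - a₁) * (b₂ - a₁) : ℝ) : ℂ) * (t : ℂ) ^ ((a₂ : ℂ) - 1) /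
                (1 + z * (t : ℂ)) ^ (σ : ℂ) *
              ((Gauss2F1 (b₁ - a₁ + 1) (b₂ - a₁ + 1) 2 (1 - t) : ℝ) : ℂ)) := by
  have hab : (b₁ - a₁) + (b₂ - a₁) = a₂ - a₁ := by linarith
  set al := b₁ - a₁ with hal
  set be := b₂ - a₁ with hbe
  have hs_pos : ∀ n : ℕ, (0:ℝ) < a₂ + n := fun n => by positivity
  have hs_cond : ∀ n : ℕ, al + be < a₂ + n := fun n => by
    have : (0:ℝ) ≤ (n:ℝ) := Nat.cast_nonneg n
    rw [hal, hbe]; linarith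
  set A : ℕ → ℂ := fun n => ((poch σ n / n.factorial : ℝ) : ℂ) * (-z)^n with hA
  have hAnorm : ∀ n, ‖A n‖ = poch σ n / n.factorial * ‖z‖^n := by
    intro n
    rw [hA]
    simp only [norm_mul, norm_pow, norm_neg, Complex.norm_real, Real.norm_eq_abs]
    rw [_root_.abs_of_nonneg (div_nonneg (poch_pos hσ n).le (Nat.cast_nonneg _))]
  have hA_summable_norm : Summable (fun n => ‖A n‖) :=
    (summable_binom_abs σ hσ (norm_nonneg z) hz).congr fun n => (hAnorm n).symm
  set D : ℕ → ℝ := fun k =>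
    (al * be) * (poch (al+1) k * poch (be+1) k / (poch 2 k * k.factorial)) with hD
  -- moment facts
  have hmom : ∀ n : ℕ, ∑' k, D k * ((k.factorial : ℝ)/poch (a₂+n) (k+1)) =
      Fg al be (a₂+n) - 1 := by
    intro n
    exact moment_sum (hs_pos n) (hs_cond n)
  have hmom_term : ∀ (s : ℝ), 0 < s → ∀ k : ℕ, D k * ((k.factorial : ℝ)/poch s (k+1)) =
      poch al (k+1) * poch be (k+1) / (((k+1).factorial : ℝ) * poch s (k+1)) := by
    intro s hs k
    rw [hD]
    exact moment_term_eq hs k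
  have hmom_summable : ∀ n : ℕ,
      Summable (fun k => D k * ((k.factorial : ℝ)/poch (a₂+n) (k+1))) := fun n =>
    ((summable_nat_add_iff 1).mpr (summable_Fg (hs_pos n) (hs_cond n))).congr
      fun k => (hmom_term (a₂+n) (hs_pos n) k).symm
  have hmom_abs_summable :
      Summable (fun k => |D k| * ((k.factorial : ℝ)/poch a₂ (k+1))) := by
    have h0 : al + be < a₂ := by rw [hal, hbe]; linarith
    refine ((summable_nat_add_iff 1).mpr (summable_Fg_abs ha₂ h0)).congr fun k => ?_
    have hq : (0:ℝ) ≤ (k.factorial : ℝ)/poch a₂ (k+1) :=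
      div_nonneg (Nat.cast_nonneg _) (poch_pos ha₂ (k+1)).le
    have hp := poch_pos ha₂ (k+1)
    have hd : (0:ℝ) < ((k+1).factorial : ℝ) * poch a₂ (k+1) :=
      mul_pos (by positivity) hp
    have e' : |D k| * ((k.factorial : ℝ)/poch a₂ (k+1)) =
        |D k * ((k.factorial : ℝ)/poch a₂ (k+1))| := by
      rw [abs_mul (D k) ((k.factorial : ℝ)/poch a₂ (k+1)), _root_.abs_of_nonneg hq]
    rw [e', hmom_term a₂ ha₂ k,
      abs_div (poch al (k+1) * poch be (k+1)) (((k+1).factorial : ℝ) * poch a₂ (k+1)),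
      _root_.abs_of_nonneg hd.le]
  -- integrability of the basic kernels
  have hψ_nonneg : ∀ (n k : ℕ) (t : ℝ), t ∈ Ioc (0:ℝ) 1 →
      (0:ℝ) ≤ t ^ (a₂ + (n:ℝ) - 1) * (1-t)^k := by
    intro n k t ht
    have h1 : (0:ℝ) < t ^ (a₂ + (n:ℝ) - 1) := Real.rpow_pos_of_pos ht.1 _
    have h2 : (0:ℝ) ≤ (1-t)^k := pow_nonneg (by linarith [ht.2]) k
    positivity
  have hψint : ∀ (n k : ℕ), IntegrableOn (fun t : ℝ => t ^ (a₂ + (n:ℝ) - 1) * (1-t)^k)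
      (Ioc (0:ℝ) 1) volume := by
    intro n k
    rw [← intervalIntegrable_iff_integrableOn_Ioc_of_le zero_le_one]
    have h1 : IntervalIntegrable (fun t : ℝ => t ^ (a₂ + (n:ℝ) - 1)) volume 0 1 :=
      intervalIntegral.intervalIntegrable_rpow' (by linarith [hs_pos n])
    exact h1.mul_continuousOn ((continuous_const.sub continuous_id).pow k).continuousOn
  have hψval : ∀ (n k : ℕ), ∫ t in Ioc (0:ℝ) 1, t ^ (a₂ + (n:ℝ) - 1) * (1-t)^k ∂volume
      = (k.factorial : ℝ)/poch (a₂+n) (k+1) := by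
    intro n k
    rw [← intervalIntegral.integral_of_le zero_le_one]
    exact beta_poch (hs_pos n) k
  -- the double-indexed family
  set H : ℕ × ℕ → ℝ → ℂ := fun p t =>
    A p.1 * ((D p.2 * (t ^ (a₂ + (p.1:ℝ) - 1) * (1-t)^p.2) : ℝ) : ℂ) with hH
  have hHfun : ∀ (n k : ℕ), (fun t => H (n,k) t) = fun t =>
      (A n * ((D k : ℝ) : ℂ)) * ((t ^ (a₂ + (n:ℝ) - 1) * (1-t)^k : ℝ) : ℂ) := by
    intro n k
    funext t
    rw [hH]
    push_cast
    ring
  have hH_int : ∀ p : ℕ × ℕ, Integrable (H p) (volume.restrict (Ioc (0:ℝ) 1)) := by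
    rintro ⟨n, k⟩
    have base : Integrable (fun t : ℝ => ((t ^ (a₂ + (n:ℝ) - 1) * (1-t)^k : ℝ) : ℂ))
        (volume.restrict (Ioc (0:ℝ) 1)) := (hψint n k).ofReal
    have := base.const_mul (A n * ((D k : ℝ) : ℂ))
    rw [show H (n,k) = fun t => (A n * ((D k : ℝ) : ℂ)) *
      ((t ^ (a₂ + (n:ℝ) - 1) * (1-t)^k : ℝ) : ℂ) from hHfun n k]
    exact this
  have hHnormval : ∀ (n k : ℕ), ∫ t, ‖H (n,k) t‖ ∂(volume.restrict (Ioc (0:ℝ) 1))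
      = ‖A n‖ * (|D k| * ((k.factorial : ℝ)/poch (a₂+n) (k+1))) := by
    intro n k
    have h1 : EqOn (fun t => ‖H (n,k) t‖)
        (fun t => (‖A n‖ * |D k|) * (t ^ (a₂ + (n:ℝ) - 1) * (1-t)^k)) (Ioc (0:ℝ) 1) := by
      intro t ht
      simp only [hH]
      rw [norm_mul, Complex.norm_real, Real.norm_eq_abs, abs_mul,
        _root_.abs_of_nonneg (hψ_nonneg n k t ht)]
      ring
    rw [setIntegral_congr_fun measurableSet_Ioc h1, MeasureTheory.integral_const_mul,
      hψval n k]
    ring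
  have hHval : ∀ (n k : ℕ), ∫ t, H (n,k) t ∂(volume.restrict (Ioc (0:ℝ) 1))
      = A n * ((D k * ((k.factorial : ℝ)/poch (a₂+n) (k+1)) : ℝ) : ℂ) := by
    intro n k
    rw [show H (n,k) = fun t => (A n * ((D k : ℝ) : ℂ)) *
      ((t ^ (a₂ + (n:ℝ) - 1) * (1-t)^k : ℝ) : ℂ) from hHfun n k]
    rw [MeasureTheory.integral_const_mul]
    rw [show (∫ t, ((t ^ (a₂ + (n:ℝ) - 1) * (1-t)^k : ℝ) : ℂ) ∂(volume.restrict (Ioc (0:ℝ) 1)))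
        = (((∫ t in Ioc (0:ℝ) 1, t ^ (a₂ + (n:ℝ) - 1) * (1-t)^k ∂volume : ℝ)) : ℂ) from
      integral_ofReal]
    rw [hψval n k]
    push_cast
    ring
  have hH_sum_norm : Summable (fun p : ℕ × ℕ =>
      ∫ t, ‖H p t‖ ∂(volume.restrict (Ioc (0:ℝ) 1))) := by
    have hbdd : Summable (fun p : ℕ × ℕ =>
        ‖A p.1‖ * (|D p.2| * ((p.2.factorial : ℝ)/poch a₂ (p.2+1)))) :=
      Summable.mul_of_nonneg hA_summable_norm hmom_abs_summable
        (fun n => norm_nonneg _) (fun k => mul_nonneg (abs_nonneg (D k))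
          (div_nonneg (Nat.cast_nonneg _) (poch_pos ha₂ (k+1)).le))
    refine hbdd.of_nonneg_of_le (fun p => MeasureTheory.integral_nonneg fun t => norm_nonneg _)
      fun p => ?_
    obtain ⟨n, k⟩ := p
    rw [hHnormval n k]
    have h2 : poch a₂ (k+1) ≤ poch (a₂+n) (k+1) :=
      poch_le_poch ha₂.le (by have : (0:ℝ) ≤ (n:ℝ) := Nat.cast_nonneg n; linarith) (k+1)
    have h3 : (k.factorial : ℝ)/poch (a₂+n) (k+1) ≤ (k.factorial : ℝ)/poch a₂ (k+1) :=
      div_le_div_of_nonneg_left (Nat.cast_nonneg _) (poch_pos ha₂ (k+1)) h2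
    have h4 : (0:ℝ) ≤ |D k| := abs_nonneg _
    have h5 : (0:ℝ) ≤ ‖A n‖ := norm_nonneg _
    nlinarith [h3, h4, h5, mul_le_mul_of_nonneg_left h3 h4]
  have hfub := MeasureTheory.integral_tsum_of_summable_integral_norm hH_int hH_sum_norm
  -- summability of the integrals
  have hE_summable : Summable (fun p : ℕ × ℕ =>
      ∫ t, H p t ∂(volume.restrict (Ioc (0:ℝ) 1))) :=
    Summable.of_norm_bounded hH_sum_norm fun p =>
      MeasureTheory.norm_integral_le_integral_norm _
  -- inner sums
  have hinner : ∀ n : ℕ, ∑' k, (A n * ((D k * ((k.factorial : ℝ)/poch (a₂+n) (k+1)) : ℝ) : ℂ))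
      = A n * ((Fg al be (a₂+n) - 1 : ℝ) : ℂ) := by
    intro n
    rw [tsum_mul_left]
    congr 1
    rw [← Complex.ofReal_tsum]
    rw [hmom n]
  -- the t-integral evaluates to the series
  have hIval : (∫ t in Ioc (0:ℝ) 1,
      (((al * be : ℝ)) : ℂ) * (t : ℂ) ^ ((a₂ : ℂ) - 1) / (1 + z * (t : ℂ)) ^ (σ : ℂ) *
        ((Gauss2F1 (al + 1) (be + 1) 2 (1 - t) : ℝ) : ℂ) ∂volume)
      = ∑' n : ℕ, A n * ((Fg al be (a₂+n) - 1 : ℝ) : ℂ) := by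
    have hptwise : EqOn (fun t : ℝ =>
        (((al * be : ℝ)) : ℂ) * (t : ℂ) ^ ((a₂ : ℂ) - 1) / (1 + z * (t : ℂ)) ^ (σ : ℂ) *
          ((Gauss2F1 (al + 1) (be + 1) 2 (1 - t) : ℝ) : ℂ))
        (fun t => ∑' p : ℕ × ℕ, H p t) (Ioc (0:ℝ) 1) := by
      intro t ht
      obtain ⟨ht0, ht1⟩ := ht
      have htz : ‖z * (t:ℂ)‖ < 1 := by
        rw [norm_mul, Complex.norm_real, Real.norm_eq_abs, _root_.abs_of_pos ht0]
        calc ‖z‖ * t ≤ ‖z‖ * 1 := by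
              exact mul_le_mul_of_nonneg_left ht1 (norm_nonneg z)
          _ < 1 := by rwa [mul_one]
      have h1t0 : (0:ℝ) ≤ 1 - t := by linarith
      have h1t1 : 1 - t < 1 := by linarith
      set Fc : ℕ → ℂ := fun n => (((poch σ n / n.factorial : ℝ)) : ℂ) * (-(z*(t:ℂ)))^n *
        ((t ^ (a₂-1) : ℝ) : ℂ) with hFc
      set Gc : ℕ → ℂ := fun k => ((D k * (1-t)^k : ℝ) : ℂ) with hGc
      have hFsum : HasSum Fc ((1 + z*(t:ℂ))^(-(σ:ℂ)) * ((t ^ (a₂-1) : ℝ) : ℂ)) :=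
        (binomial_hasSum hσ htz).mul_right _
      have hFnorm : Summable (fun n => ‖Fc n‖) := by
        refine (((summable_binom_abs σ hσ (norm_nonneg (z*(t:ℂ))) htz)).mul_right
          |t ^ (a₂-1)|).congr fun n => ?_
        rw [hFc]
        simp only [norm_mul, norm_pow, norm_neg, Complex.norm_real, Real.norm_eq_abs]
        rw [_root_.abs_of_nonneg (div_nonneg (poch_pos hσ n).le (Nat.cast_nonneg _))]
      have hGnorm : Summable (fun k => ‖Gc k‖) := by
        refine ((summable_D_abs (al+1) (be+1) h1t0 h1t1).mul_left |al*be|).congr fun k => ?_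
        rw [hGc, hD]
        simp only [Complex.norm_real, Real.norm_eq_abs]
        rw [← abs_mul]
        congr 1
        ring
      have hHF : ∀ p : ℕ × ℕ, Fc p.1 * Gc p.2 = H p t := by
        rintro ⟨n, k⟩
        rw [hH, hFc, hGc, hA]
        simp only []
        have e1 : t ^ (a₂ + (n:ℝ) - 1) = t ^ (a₂ - 1) * t ^ (n:ℕ) := by
          rw [show a₂ + (n:ℝ) - 1 = (a₂ - 1) + (n:ℝ) by ring, Real.rpow_add ht0,
            Real.rpow_natCast]
        rw [e1]
        push_cast
        ring
      have hDsum : Summable (fun k => D k * (1-t)^k) := by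
        have h2 := ((summable_D_abs (al+1) (be+1) h1t0 h1t1).of_abs).mul_left (al*be)
        refine h2.congr fun k => ?_
        rw [hD]
        ring
      have hGsum : (∑' k, Gc k) = (((al*be) * Gauss2F1 (al+1) (be+1) 2 (1-t) : ℝ) : ℂ) := by
        rw [hGc, ← Complex.ofReal_tsum]
        congr 1
        rw [Gauss2F1, ← tsum_mul_left]
        refine tsum_congr fun k => ?_
        rw [hD]
        ring
      have hmul := tsum_mul_tsum_of_summable_norm hFnorm hGnorm
      have e2 : (t:ℂ) ^ ((a₂:ℂ) - 1) = ((t ^ (a₂-1) : ℝ) : ℂ) := by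
        rw [show ((a₂:ℂ) - 1) = ((a₂ - 1 : ℝ) : ℂ) by push_cast; ring,
          ← Complex.ofReal_cpow ht0.le]
      show (((al * be : ℝ)) : ℂ) * (t : ℂ) ^ ((a₂ : ℂ) - 1) / (1 + z * (t : ℂ)) ^ (σ : ℂ) *
          ((Gauss2F1 (al + 1) (be + 1) 2 (1 - t) : ℝ) : ℂ) = ∑' p : ℕ × ℕ, H p t
      rw [← tsum_congr hHF, ← hmul, hFsum.tsum_eq, hGsum, e2, Complex.cpow_neg]
      push_cast
      field_simp
    rw [MeasureTheory.setIntegral_congr_fun measurableSet_Ioc hptwise, ← hfub]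
    rw [Summable.tsum_prod' hE_summable (fun n => hE_summable.prod_factor n)]
    have : ∀ n : ℕ, ∑' k, (∫ t, H (n,k) t ∂(volume.restrict (Ioc (0:ℝ) 1)))
        = A n * ((Fg al be (a₂+n) - 1 : ℝ) : ℂ) := by
      intro n
      rw [← hinner n]
      exact tsum_congr fun k => hHval n k
    exact tsum_congr this
  -- boundedness of Fg values, summability of the series
  have hFg_bdd : ∃ M : ℝ, ∀ n : ℕ, |Fg al be (a₂+n) - 1| ≤ M := by
    have h0 : al + be < a₂ := by rw [hal, hbe]; linarith
    have h1 : Tendsto (fun n : ℕ => |Fg al be (a₂+n) - 1|) atTop (𝓝 0) := by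
      have h2 := (tendsto_Fg_one ha₂ h0).sub_const 1
      rw [sub_self] at h2
      have h3 := h2.abs
      rwa [abs_zero] at h3
    obtain ⟨M, hM⟩ := h1.bddAbove_range
    exact ⟨M, fun n => hM ⟨n, rfl⟩⟩
  obtain ⟨M, hM⟩ := hFg_bdd
  have hsum2 : Summable (fun n : ℕ => A n * ((Fg al be (a₂+n) - 1 : ℝ) : ℂ)) := by
    refine Summable.of_norm_bounded (hA_summable_norm.mul_right M)
      fun n => ?_
    rw [norm_mul, Complex.norm_real, Real.norm_eq_abs]
    exact mul_le_mul_of_nonneg_left (hM n) (norm_nonneg _)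
  have hbinz : HasSum A ((1+z) ^ (-(σ:ℂ))) := binomial_hasSum hσ hz
  -- Gauss evaluation
  have hgauss : ∀ n : ℕ, Fg al be (a₂+n) =
      Real.Gamma (a₂+n) * Real.Gamma (a₁+n) / (Real.Gamma (b₂+n) * Real.Gamma (b₁+n)) := by
    intro n
    have hn0 : (0:ℝ) ≤ (n:ℝ) := Nat.cast_nonneg n
    have h1 := gauss_sum (α := al) (β := be) (c := a₂ + n) (hs_pos n)
      (by rw [hal]; linarith) (by rw [hbe]; linarith) (hs_cond n)
    rw [h1]
    have e1 : a₂ + (n:ℝ) - al - be = a₁ + n := by rw [hal, hbe]; linarith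
    have e2 : a₂ + (n:ℝ) - al = b₂ + n := by rw [hal]; linarith
    have e3 : a₂ + (n:ℝ) - be = b₁ + n := by rw [hbe]; linarith
    rw [e1, e2, e3]
  -- final assembly
  have hbracket : (1 + z) ^ (-(σ:ℂ)) + ∑' n, A n * ((Fg al be (a₂+n) - 1 : ℝ) : ℂ)
      = ∑' n, A n * ((Fg al be (a₂+n) : ℝ) : ℂ) := by
    rw [← hbinz.tsum_eq, ← Summable.tsum_add hbinz.summable hsum2]
    refine tsum_congr fun n => ?_
    push_cast
    ring
  rw [intervalIntegral.integral_of_le zero_le_one, hIval, hbracket, ← tsum_mul_left]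
  refine (tsum_congr fun n => ?_).symm
  rw [hgauss n, hA]
  have hG1 := Real.Gamma_pos_of_pos ha₁
  have hG2 := Real.Gamma_pos_of_pos ha₂
  have hG3 := Real.Gamma_pos_of_pos hb₁
  have hG4 := Real.Gamma_pos_of_pos hb₂
  have hGn1 := Real.Gamma_pos_of_pos (show (0:ℝ) < a₁ + n by positivity)
  have hGn2 := Real.Gamma_pos_of_pos (show (0:ℝ) < a₂ + n by positivity)
  have hGn3 := Real.Gamma_pos_of_pos (show (0:ℝ) < b₁ + n by positivity)
  have hGn4 := Real.Gamma_pos_of_pos (show (0:ℝ) < b₂ + n by positivity)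
  have hreal : Real.Gamma b₁ * Real.Gamma b₂ / (Real.Gamma a₁ * Real.Gamma a₂) *
      (poch σ n / n.factorial) *
      (Real.Gamma (a₂+n) * Real.Gamma (a₁+n) / (Real.Gamma (b₂+n) * Real.Gamma (b₁+n)))
      = poch σ n * poch a₁ n * poch a₂ n / (poch b₁ n * poch b₂ n * n.factorial) := by
    rw [Gamma_poch ha₁ n, Gamma_poch ha₂ n, Gamma_poch hb₁ n, Gamma_poch hb₂ n]
    have hp1 := poch_pos ha₁ n
    have hp2 := poch_pos ha₂ n
    have hp3 := poch_pos hb₁ n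
    have hp4 := poch_pos hb₂ n
    have hnf : (0:ℝ) < (n.factorial : ℝ) := by positivity
    field_simp
  rw [← hreal]
  push_cast
  ring
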